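/- arXiv:2011.13163 — 2 statements merged into one kernel-verified Lean document; each statement's English description precedes it below -/
import Mathlib

section
/- For every network g and every non-adjacent pair of distinct vertices i, j, the game-theoretic centrality satisfies C_GT(i, g+ij) − C_GT(i, g) = 1/(deg_g(j)+2) − 1/((deg_g(i)+1)(deg_g(i)+2)); consequently C_GT(i, g+ij) > C_GT(i, g) if and only if deg_g(j) ≤ (deg_g(i)+1)(deg_g(i)+2) − 3 (as integers). Hence game-theoretic centrality is degree homophilic with the strictly increasing function f : ℕ → ℤ, f(n) = (n+1)(n+2) − 3, which satisfies f(0) = −1. -/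
open SimpleGraph

/-- Degree of vertex `i` in network `g`. -/
noncomputable def deg {V : Type*} (g : SimpleGraph V) (i : V) : ℕ :=
  Nat.card (g.neighborSet i)

/-- The network `g` with the (missing) edge `ij` added. -/
def addE {V : Type*} (g : SimpleGraph V) (i j : V) : SimpleGraph V :=
  g ⊔ SimpleGraph.fromEdgeSet {s(i, j)}

/-- The network `g` with the edge `ij` removed. -/
def delE {V : Type*} (g : SimpleGraph V) (i j : V) : SimpleGraph V :=
  g.deleteEdges {s(i, j)}

/-- Utility of agent `i` in the game with centralities `C` and edge cost `c`. -/
noncomputable def util {V : Type*} (C : V → SimpleGraph V → ℝ) (c : ℝ) (i : V)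
    (g : SimpleGraph V) : ℝ :=
  C i g - c * (deg g i)

/-- Adding the missing edge `ij` is an improving move. -/
def ImprovingAdd {V : Type*} (C : V → SimpleGraph V → ℝ) (c : ℝ) (g : SimpleGraph V)
    (i j : V) : Prop :=
  util C c i (addE g i j) ≥ util C c i g ∧ util C c j (addE g i j) ≥ util C c j g ∧
    (util C c i (addE g i j) > util C c i g ∨ util C c j (addE g i j) > util C c j g)

/-- Deleting the edge `ij` is an improving move. -/
def ImprovingDel {V : Type*} (C : V → SimpleGraph V → ℝ) (c : ℝ) (g : SimpleGraph V)
    (i j : V) : Prop :=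
  util C c i (delE g i j) > util C c i g ∨ util C c j (delE g i j) > util C c j g

/-- `g` is pairwise stable at edge cost `c`. -/
def PairwiseStable {V : Type*} (C : V → SimpleGraph V → ℝ) (c : ℝ) (g : SimpleGraph V) : Prop :=
  (∀ i j : V, i ≠ j → ¬ g.Adj i j → ¬ ImprovingAdd C c g i j) ∧
  (∀ i j : V, g.Adj i j → ¬ ImprovingDel C c g i j)

/-- `g` is asymptotically pairwise stable. -/
def APSN {V : Type*} (C : V → SimpleGraph V → ℝ) (g : SimpleGraph V) : Prop :=
  ∃ ε₀ : ℝ, 0 < ε₀ ∧ ∀ c : ℝ, 0 < c → c < ε₀ → PairwiseStable C c g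

/-- Axiom 1: the centrality of agent `i` is increasing. -/
def Axiom1 {V : Type*} (C : V → SimpleGraph V → ℝ) (i : V) : Prop :=
  ∀ (g : SimpleGraph V) (j : V), j ≠ i → ¬ g.Adj i j → C i (addE g i j) > C i g

/-- Axiom 1′: the centrality of agent `i` is decreasing. -/
def Axiom1' {V : Type*} (C : V → SimpleGraph V → ℝ) (i : V) : Prop :=
  ∀ (g : SimpleGraph V) (j : V), j ≠ i → ¬ g.Adj i j → C i (addE g i j) < C i g

/-- Axiom 2: the centrality of agent `i` is componentwise. -/
def Axiom2 {V : Type*} (C : V → SimpleGraph V → ℝ) (i : V) : Prop :=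
  ∀ (g : SimpleGraph V) (j : V), j ≠ i → ¬ g.Adj i j →
    ((g.Reachable i j → C i (addE g i j) > C i g) ∧
     (¬ g.Reachable i j → C i (addE g i j) ≤ C i g))

/-- Axiom 2′: the centrality of agent `i` is peripheral. -/
def Axiom2' {V : Type*} (C : V → SimpleGraph V → ℝ) (i : V) : Prop :=
  ∀ (g : SimpleGraph V) (j : V), j ≠ i → ¬ g.Adj i j →
    ((g.Reachable i j → C i (addE g i j) ≤ C i g) ∧
     (¬ g.Reachable i j → C i (addE g i j) > C i g))

/-- The centrality of agent `i` is degree homophilic with (strictly increasing) `f`. -/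
def DegreeHomophilic {V : Type*} (C : V → SimpleGraph V → ℝ) (i : V) (f : ℕ → ℤ) : Prop :=
  ∀ (g : SimpleGraph V) (j : V), j ≠ i → ¬ g.Adj i j →
    (C i (addE g i j) > C i g ↔ (deg g j : ℤ) ≤ f (deg g i))

open scoped Classical in
/-- Game-theoretic centrality of `i` in `g`: `∑_{j ∈ N(i) ∪ {i}} 1/(deg j + 1)`. -/
noncomputable def CGT {V : Type*} [Fintype V] (g : SimpleGraph V) (i : V) : ℝ :=
  ∑ j : V, if j = i ∨ g.Adj i j then 1 / ((deg g j : ℝ) + 1) else 0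

section aux
set_option linter.unusedSectionVars false
variable {V : Type*} [Fintype V] {g : SimpleGraph V} {i j : V}

lemma addE_adj (hij : i ≠ j) (a b : V) :
    (addE g i j).Adj a b ↔ g.Adj a b ∨ (a = i ∧ b = j) ∨ (a = j ∧ b = i) := by
  simp only [addE, SimpleGraph.sup_adj, SimpleGraph.fromEdgeSet_adj, Set.mem_singleton_iff,
    Sym2.eq_iff]
  constructor
  · rintro (h | ⟨(⟨rfl, rfl⟩ | ⟨rfl, rfl⟩), hne⟩) <;> tauto
  · rintro (h | ⟨rfl, rfl⟩ | ⟨rfl, rfl⟩)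
    · tauto
    · exact Or.inr ⟨Or.inl ⟨rfl, rfl⟩, hij⟩
    · exact Or.inr ⟨Or.inr ⟨rfl, rfl⟩, hij.symm⟩

lemma deg_eq_ncard (g : SimpleGraph V) (k : V) : deg g k = (g.neighborSet k).ncard :=
  Nat.card_coe_set_eq _

lemma ns_addE_i (hij : i ≠ j) : (addE g i j).neighborSet i = insert j (g.neighborSet i) := by
  ext k
  simp only [SimpleGraph.mem_neighborSet, addE_adj hij, Set.mem_insert_iff]
  constructor
  · rintro (h | ⟨-, rfl⟩ | ⟨h, -⟩)
    · tauto
    · tauto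
    · exact absurd h hij
  · rintro (rfl | h) <;> tauto

lemma ns_addE_j (hij : i ≠ j) : (addE g i j).neighborSet j = insert i (g.neighborSet j) := by
  ext k
  simp only [SimpleGraph.mem_neighborSet, addE_adj hij, Set.mem_insert_iff]
  constructor
  · rintro (h | ⟨h, -⟩ | ⟨-, rfl⟩)
    · tauto
    · exact absurd h hij.symm
    · tauto
  · rintro (rfl | h) <;> tauto

lemma ns_addE_other (hij : i ≠ j) {k : V} (hki : k ≠ i) (hkj : k ≠ j) :
    (addE g i j).neighborSet k = g.neighborSet k := by
  ext m
  simp only [SimpleGraph.mem_neighborSet, addE_adj hij]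
  constructor
  · rintro (h | ⟨rfl, -⟩ | ⟨rfl, -⟩)
    · exact h
    · exact absurd rfl hki
    · exact absurd rfl hkj
  · tauto

lemma deg_addE_i (hij : i ≠ j) (hadj : ¬ g.Adj i j) :
    deg (addE g i j) i = deg g i + 1 := by
  rw [deg_eq_ncard, deg_eq_ncard, ns_addE_i hij,
    Set.ncard_insert_of_notMem (by simpa using hadj) (Set.toFinite _)]

lemma deg_addE_j (hij : i ≠ j) (hadj : ¬ g.Adj i j) :
    deg (addE g i j) j = deg g j + 1 := by
  rw [deg_eq_ncard, deg_eq_ncard, ns_addE_j hij,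
    Set.ncard_insert_of_notMem (by simpa using fun h => hadj h.symm) (Set.toFinite _)]

lemma deg_addE_other (hij : i ≠ j) {k : V} (hki : k ≠ i) (hkj : k ≠ j) :
    deg (addE g i j) k = deg g k := by
  rw [deg_eq_ncard, deg_eq_ncard, ns_addE_other hij hki hkj]

open scoped Classical in
lemma CGT_diff (hij : i ≠ j) (hadj : ¬ g.Adj i j) :
    CGT (addE g i j) i - CGT g i
      = 1 / ((deg g j : ℝ) + 2) - 1 / (((deg g i : ℝ) + 1) * ((deg g i : ℝ) + 2)) := by
  classical
  set F : V → ℝ := fun k =>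
    (if k = i ∨ (addE g i j).Adj i k then 1 / ((deg (addE g i j) k : ℝ) + 1) else 0)
    - (if k = i ∨ g.Adj i k then 1 / ((deg g k : ℝ) + 1) else 0) with hF
  have hsum : CGT (addE g i j) i - CGT g i = ∑ k : V, F k := by
    unfold CGT
    rw [← Finset.sum_sub_distrib]
  have hzero : ∀ k ∈ (Finset.univ : Finset V), k ∉ ({i, j} : Finset V) → F k = 0 := by
    intro k _ hk
    simp only [Finset.mem_insert, Finset.mem_singleton, not_or] at hk
    obtain ⟨hki, hkj⟩ := hk
    have hadj' : (addE g i j).Adj i k ↔ g.Adj i k := by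
      rw [addE_adj hij]
      constructor
      · rintro (h | ⟨-, rfl⟩ | ⟨h, -⟩)
        · exact h
        · exact absurd rfl hkj
        · exact absurd h hij
      · tauto
    simp only [hF, deg_addE_other hij hki hkj, hadj', sub_self]
  have h1 : ∑ k : V, F k = ∑ k ∈ ({i, j} : Finset V), F k :=
    (Finset.sum_subset (Finset.subset_univ _) hzero).symm
  have h2 : ∑ k ∈ ({i, j} : Finset V), F k = F i + F j := Finset.sum_pair hij
  have hFi : F i = 1 / ((deg g i : ℝ) + 2) - 1 / ((deg g i : ℝ) + 1) := by
    simp only [hF, eq_self_iff_true, true_or, if_true, deg_addE_i hij hadj]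
    push_cast; ring
  have hFj : F j = 1 / ((deg g j : ℝ) + 2) := by
    have hadj' : (addE g i j).Adj i j := by rw [addE_adj hij]; tauto
    have hnot : ¬ (j = i ∨ g.Adj i j) := by
      rintro (rfl | h)
      · exact hij rfl
      · exact hadj h
    simp only [hF, if_pos (Or.inr hadj'), if_neg hnot, deg_addE_j hij hadj, sub_zero]
    push_cast; ring
  rw [hsum, h1, h2, hFi, hFj]
  have h3 : (0:ℝ) < (deg g i : ℝ) + 1 := by positivity
  have h4 : (0:ℝ) < (deg g i : ℝ) + 2 := by positivity
  have h5 : (0:ℝ) < (deg g j : ℝ) + 2 := by positivity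
  field_simp
  ring

lemma CGT_iff (hij : i ≠ j) (hadj : ¬ g.Adj i j) :
    CGT (addE g i j) i > CGT g i ↔
      (deg g j : ℤ) ≤ ((deg g i : ℤ) + 1) * ((deg g i : ℤ) + 2) - 3 := by
  have hd := CGT_diff hij hadj
  have h5 : (0:ℝ) < (deg g j : ℝ) + 2 := by positivity
  have h6 : (0:ℝ) < ((deg g i : ℝ) + 1) * ((deg g i : ℝ) + 2) := by positivity
  rw [gt_iff_lt, ← sub_pos, hd, sub_pos, div_lt_div_iff₀ h6 h5, one_mul, one_mul]
  rw [show ((deg g j : ℝ) + 2 < ((deg g i : ℝ) + 1) * ((deg g i : ℝ) + 2)) ↔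
      ((deg g j : ℤ) + 2 < ((deg g i : ℤ) + 1) * ((deg g i : ℤ) + 2)) by
    constructor <;> intro h <;> exact_mod_cast h]
  omega

end aux

/-- The function `f(n) = (n+1)(n+2) − 3`. -/
def fGT (n : ℕ) : ℤ := ((n : ℤ) + 1) * ((n : ℤ) + 2) - 3

theorem statement_2 {V : Type*} [Fintype V] :
    (∀ (g : SimpleGraph V) (i j : V), i ≠ j → ¬ g.Adj i j →
      CGT (addE g i j) i - CGT g i
        = 1 / ((deg g j : ℝ) + 2) - 1 / (((deg g i : ℝ) + 1) * ((deg g i : ℝ) + 2)) ∧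
      (CGT (addE g i j) i > CGT g i ↔
        (deg g j : ℤ) ≤ ((deg g i : ℤ) + 1) * ((deg g i : ℤ) + 2) - 3)) ∧
    StrictMono fGT ∧ fGT 0 = -1 ∧
    (∀ i : V, DegreeHomophilic (fun v h => CGT h v) i fGT) := by
  refine ⟨fun g i j hij hadj => ⟨CGT_diff hij hadj, CGT_iff hij hadj⟩, ?_, by decide, ?_⟩
  · apply strictMono_nat_of_lt_succ
    intro n
    simp only [fGT]
    push_cast
    nlinarith [Int.ofNat_nonneg n]
  · intro i g j hji hadj
    simpa only [fGT] using CGT_iff hji.symm hadj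
end

section
/- Betweenness centrality behaves as follows under edge flips. (i) If i and j lie in different connected components of g and ij ∉ g, then C_btw(i, g+ij) ≥ C_btw(i, g), and the inequality is strict unless i is isolated in g. (ii) If ij is a bridge edge of g (its removal disconnects i from j), then in the betweenness centrality game there exists c₀ > 0 such that deleting ij strictly increases i's utility at every cost c ∈ (0, c₀) if and only if deg_g(i) = 1. (iii) If ij ∉ g and i and j lie in the same connected component of g, then C_btw(i, g+ij) ≥ C_btw(i, g). -/
open SimpleGraph

/-- The number of shortest paths between `y` and `z` in `g`
(`0` if `y` and `z` are in different components). -/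
noncomputable def sigmaAll {V : Type*} (g : SimpleGraph V) (y z : V) : ℕ :=
  Nat.card {p : g.Path y z // p.1.length = g.dist y z}

/-- The number of shortest paths between `y` and `z` in `g` passing through `i`. -/
noncomputable def sigmaThr {V : Type*} (g : SimpleGraph V) (y z i : V) : ℕ :=
  Nat.card {p : g.Path y z // p.1.length = g.dist y z ∧ i ∈ p.1.support}

open scoped Classical in
/-- Betweenness centrality of `i` in `g`: the sum over unordered pairs `{y,z} ⊆ V∖{i}`
of `σ_yz(i)/σ_yz(g)` (summands with `σ_yz(g) = 0` vanish, since `x/0 = 0` in `ℝ`). -/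
noncomputable def btw {V : Type*} [Fintype V] (g : SimpleGraph V) (i : V) : ℝ :=
  (1 / 2) * ∑ y : V, ∑ z : V,
    if y ≠ z ∧ y ≠ i ∧ z ≠ i then (sigmaThr g y z i : ℝ) / (sigmaAll g y z : ℝ) else 0


section Helpers

variable {V : Type*} [Fintype V]

private instance pathFinite (g : SimpleGraph V) (u v : V) : Finite (g.Path u v) := by
  classical
  infer_instance

private lemma card_split {α : Type*} [Finite α] (P Q : α → Prop) :
    Nat.card {x // P x} = Nat.card {x // P x ∧ Q x} + Nat.card {x // P x ∧ ¬ Q x} := by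
  classical
  have e : {x // P x} ≃ {x : {x // P x} // Q x.1} ⊕ {x : {x // P x} // ¬ Q x.1} :=
    (Equiv.sumCompl fun x : {x // P x} => Q x.1).symm
  rw [Nat.card_congr e, Nat.card_sum,
    Nat.card_congr (Equiv.subtypeSubtypeEquivSubtypeInter P Q),
    Nat.card_congr (Equiv.subtypeSubtypeEquivSubtypeInter P fun x => ¬ Q x)]

private lemma le_addE (g : SimpleGraph V) (i j : V) : g ≤ addE g i j := le_sup_left

private lemma addE_edgeSet_sub (g : SimpleGraph V) (i j : V) :
    (addE g i j).edgeSet ⊆ g.edgeSet ∪ {s(i, j)} := by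
  rw [addE, edgeSet_sup, edgeSet_fromEdgeSet]
  exact Set.union_subset_union_right _ Set.diff_subset

private lemma addE_adj_right (g : SimpleGraph V) {i j : V} (hne : i ≠ j) :
    (addE g i j).Adj i j := by
  simp [addE, fromEdgeSet_adj, hne]

/-- Transfer equivalence between paths of `addE g i j` avoiding `s(i,j)` and paths of `g`. -/
private lemma card_transfer (g : SimpleGraph V) {i j : V} (hadj : ¬ g.Adj i j)
    (y z : V) (Q : ℕ → List V → Prop) :
    Nat.card {p : (addE g i j).Path y z // Q p.1.length p.1.support ∧ s(i, j) ∉ p.1.edges} =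
      Nat.card {p : g.Path y z // Q p.1.length p.1.support} := by
  classical
  apply Nat.card_congr
  refine Equiv.mk
    (fun p => ⟨⟨p.1.1.transfer g ?_, p.1.2.transfer _⟩, ?_⟩)
    (fun p => ⟨⟨p.1.1.transfer (addE g i j) ?_, p.1.2.transfer _⟩, ?_, ?_⟩) ?_ ?_
  · intro e he
    rcases addE_edgeSet_sub g i j (p.1.1.edges_subset_edgeSet he) with h | h
    · exact h
    · exact absurd (Set.mem_singleton_iff.mp h ▸ he) p.2.2
  · simpa using p.2.1
  · exact fun e he => edgeSet_mono (le_addE g i j) (p.1.1.edges_subset_edgeSet he)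
  · simpa using p.2
  · rw [SimpleGraph.Walk.edges_transfer]
    intro h
    exact hadj (p.1.1.edges_subset_edgeSet h)
  · intro p
    apply Subtype.ext
    apply Subtype.ext
    simp only [SimpleGraph.Walk.transfer_transfer]
    exact SimpleGraph.Walk.transfer_self _
  · intro p
    apply Subtype.ext
    apply Subtype.ext
    simp only [SimpleGraph.Walk.transfer_transfer]
    exact SimpleGraph.Walk.transfer_self _

private lemma sigmaThr_le (g : SimpleGraph V) (y z i : V) :
    sigmaThr g y z i ≤ sigmaAll g y z := by
  apply Nat.card_le_card_of_injective
    (fun p : {p : g.Path y z // p.1.length = g.dist y z ∧ i ∈ p.1.support} =>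
      (⟨p.1, p.2.1⟩ : {p : g.Path y z // p.1.length = g.dist y z}))
  intro a b hab
  simp only [Subtype.mk.injEq] at hab
  exact Subtype.ext hab

private lemma sigmaAll_pos (g : SimpleGraph V) {y z : V} (h : g.Reachable y z) :
    0 < sigmaAll g y z := by
  obtain ⟨p, hp, hlen⟩ := h.exists_path_of_dist
  rw [sigmaAll, Nat.card_pos_iff]
  exact ⟨⟨⟨⟨p, hp⟩, hlen⟩⟩, inferInstance⟩

private lemma sigmaAll_eq_zero (g : SimpleGraph V) {y z : V} (h : ¬ g.Reachable y z) :
    sigmaAll g y z = 0 := by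
  rw [sigmaAll, Nat.card_eq_zero]
  left
  constructor
  intro p
  exact h p.1.1.reachable

private lemma dist_addE_le (g : SimpleGraph V) {i j y z : V} (h : g.Reachable y z) :
    (addE g i j).dist y z ≤ g.dist y z := by
  obtain ⟨p, hp, hlen⟩ := h.exists_path_of_dist
  calc (addE g i j).dist y z ≤ (p.transfer (addE g i j)
        (fun e he => edgeSet_mono (le_addE g i j) (p.edges_subset_edgeSet he))).length :=
      SimpleGraph.dist_le _
    _ = g.dist y z := by rw [SimpleGraph.Walk.length_transfer]; exact hlen

/-- The key pointwise inequality: the betweenness ratio of `i` at pair `(y,z)` does not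
decrease when an edge at `i` is added. -/
private lemma ratio_mono (g : SimpleGraph V) {i j : V} (hne : i ≠ j) (hadj : ¬ g.Adj i j)
    (y z : V) :
    (sigmaThr g y z i : ℝ) / (sigmaAll g y z : ℝ) ≤
      (sigmaThr (addE g i j) y z i : ℝ) / (sigmaAll (addE g i j) y z : ℝ) := by
  classical
  set g' := addE g i j with hg'
  by_cases hr : g.Reachable y z
  · have hr' : g'.Reachable y z := hr.mono (le_addE g i j)
    have hd : g'.dist y z ≤ g.dist y z := dist_addE_le g hr
    rcases lt_or_eq_of_le hd with hlt | heq
    · -- distance strictly decreases: every new shortest path goes through i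
      have hall : ∀ p : g'.Path y z, p.1.length = g'.dist y z → i ∈ p.1.support := by
        intro p hlen
        by_contra hi
        have he : s(i, j) ∉ p.1.edges := fun h =>
          hi (p.1.fst_mem_support_of_mem_edges h)
        have hsub : ∀ e ∈ p.1.edges, e ∈ g.edgeSet := by
          intro e hee
          rcases addE_edgeSet_sub g i j (p.1.edges_subset_edgeSet hee) with h | h
          · exact h
          · exact absurd (Set.mem_singleton_iff.mp h ▸ hee) he
        have := SimpleGraph.dist_le (p.1.transfer g hsub)
        rw [SimpleGraph.Walk.length_transfer, hlen] at this
        omega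
      have hthr : sigmaThr g' y z i = sigmaAll g' y z := by
        rw [sigmaThr, sigmaAll]
        apply Nat.card_congr
        exact Equiv.subtypeEquivRight fun p =>
          ⟨fun h => h.1, fun h => ⟨h, hall p h⟩⟩
      have hpos : (0 : ℝ) < (sigmaAll g' y z : ℝ) := by
        exact_mod_cast sigmaAll_pos g' hr'
      rw [hthr, div_self (ne_of_gt hpos)]
      exact div_le_one_of_le₀ (by exact_mod_cast sigmaThr_le g y z i) (by positivity)
    · -- distance unchanged: mediant inequality
      set d := g.dist y z with hdd
      set a := Nat.card {p : g'.Path y z //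
          p.1.length = g'.dist y z ∧ s(i, j) ∈ p.1.edges} with ha
      have hA : sigmaAll g' y z = a + sigmaAll g y z := by
        rw [sigmaAll, card_split (fun p : g'.Path y z => p.1.length = g'.dist y z)
          (fun p => s(i, j) ∈ p.1.edges)]
        congr 1
        have := card_transfer g hadj y z (fun l _ => l = d)
        rw [sigmaAll]
        rw [show (fun p : g'.Path y z => p.1.length = g'.dist y z ∧ s(i,j) ∉ p.1.edges)
            = (fun p : g'.Path y z => p.1.length = d ∧ s(i,j) ∉ p.1.edges) by
          funext p; rw [heq]]
        rw [show (fun p : g.Path y z => p.1.length = g.dist y z)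
            = (fun p : g.Path y z => p.1.length = d) from rfl]
        exact this
      have hB : sigmaThr g' y z i = a + sigmaThr g y z i := by
        rw [sigmaThr, card_split (fun p : g'.Path y z =>
          p.1.length = g'.dist y z ∧ i ∈ p.1.support) (fun p => s(i, j) ∈ p.1.edges)]
        congr 1
        · rw [ha]
          apply Nat.card_congr
          exact Equiv.subtypeEquivRight fun p =>
            ⟨fun h => ⟨h.1.1, h.2⟩,
             fun h => ⟨⟨h.1, p.1.fst_mem_support_of_mem_edges h.2⟩, h.2⟩⟩
        · have := card_transfer g hadj y z (fun l s => l = d ∧ i ∈ s)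
          rw [sigmaThr]
          rw [show (fun p : g'.Path y z =>
              (p.1.length = g'.dist y z ∧ i ∈ p.1.support) ∧ s(i,j) ∉ p.1.edges)
              = (fun p : g'.Path y z =>
                (p.1.length = d ∧ i ∈ p.1.support) ∧ s(i,j) ∉ p.1.edges) by
            funext p; rw [heq]]
          exact this
      have hσpos : 0 < sigmaAll g y z := sigmaAll_pos g hr
      have hle : sigmaThr g y z i ≤ sigmaAll g y z := sigmaThr_le g y z i
      rw [hA, hB]
      have hleR : (sigmaThr g y z i : ℝ) ≤ (sigmaAll g y z : ℝ) := by exact_mod_cast hle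
      rw [div_le_div_iff₀ (by exact_mod_cast hσpos) (by positivity)]
      push_cast
      nlinarith [Nat.cast_nonneg (α := ℝ) a, hleR]
  · -- y, z not reachable in g : old ratio is 0
    have h0 : sigmaAll g y z = 0 := sigmaAll_eq_zero g hr
    have h0' : sigmaThr g y z i = 0 :=
      Nat.le_zero.mp (h0 ▸ sigmaThr_le g y z i)
    rw [h0, h0']
    simp
    positivity

private lemma btw_le_addE (g : SimpleGraph V) {i j : V} (hne : i ≠ j) (hadj : ¬ g.Adj i j) :
    btw g i ≤ btw (addE g i j) i := by
  classical
  simp only [_root_.btw]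
  apply mul_le_mul_of_nonneg_left _ (by norm_num)
  apply Finset.sum_le_sum
  intro y _
  apply Finset.sum_le_sum
  intro z _
  split_ifs with h
  · exact ratio_mono g hne hadj y z
  · exact le_rfl

/-- If `i` and `j` are in different components and `i` has a neighbor, adding `ij`
strictly increases the betweenness of `i`. -/
private lemma btw_lt_addE (g : SimpleGraph V) {i j k : V} (hne : i ≠ j) (hadj : ¬ g.Adj i j)
    (hreach : ¬ g.Reachable i j) (hk : g.Adj i k) :
    btw g i < btw (addE g i j) i := by
  classical
  set g' := addE g i j with hg'
  have hkj : k ≠ j := fun h => hreach (h ▸ hk.reachable)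
  have hki : k ≠ i := hk.ne'
  have hji : j ≠ i := hne.symm
  have hrkj : ¬ g.Reachable k j := fun h => hreach (hk.reachable.trans h)
  -- the (k, j) term strictly increases
  have hterm_old : (sigmaThr g k j i : ℝ) / (sigmaAll g k j : ℝ) = 0 := by
    rw [sigmaAll_eq_zero g hrkj]
    simp
  have hall : ∀ p : g'.Path k j, i ∈ p.1.support := by
    intro p
    by_contra hi
    have he : s(i, j) ∉ p.1.edges := fun h => hi (p.1.fst_mem_support_of_mem_edges h)
    have hsub : ∀ e ∈ p.1.edges, e ∈ g.edgeSet := by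
      intro e hee
      rcases addE_edgeSet_sub g i j (p.1.edges_subset_edgeSet hee) with h | h
      · exact h
      · exact absurd (Set.mem_singleton_iff.mp h ▸ hee) he
    exact hrkj (p.1.transfer g hsub).reachable
  have hr' : g'.Reachable k j :=
    ((hk.symm.reachable.mono (le_addE g i j)).trans (addE_adj_right g hne).reachable)
  have hterm_new : (sigmaThr g' k j i : ℝ) / (sigmaAll g' k j : ℝ) = 1 := by
    have hthr : sigmaThr g' k j i = sigmaAll g' k j := by
      rw [sigmaThr, sigmaAll]
      exact Nat.card_congr (Equiv.subtypeEquivRight fun p =>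
        ⟨fun h => h.1, fun h => ⟨h, hall p⟩⟩)
    have hpos : (0 : ℝ) < (sigmaAll g' k j : ℝ) := by exact_mod_cast sigmaAll_pos g' hr'
    rw [hthr, div_self (ne_of_gt hpos)]
  simp only [_root_.btw]
  apply mul_lt_mul_of_pos_left _ (by norm_num : (0:ℝ) < 1/2)
  apply Finset.sum_lt_sum
  · intro y _
    apply Finset.sum_le_sum
    intro z _
    split_ifs with h
    · exact ratio_mono g hne hadj y z
    · exact le_rfl
  · refine ⟨k, Finset.mem_univ k, ?_⟩
    apply Finset.sum_lt_sum
    · intro z _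
      split_ifs with h
      · exact ratio_mono g hne hadj k z
      · exact le_rfl
    · refine ⟨j, Finset.mem_univ j, ?_⟩
      rw [if_pos ⟨hkj, hki, hji⟩, if_pos ⟨hkj, hki, hji⟩, hterm_old, hterm_new]
      norm_num

/-- If all neighbors of `i` are equal to `j`, a path between two vertices distinct
from `i` cannot pass through `i`. -/
private lemma not_mem_support (g : SimpleGraph V) {i j y z : V}
    (hdeg : ∀ a, g.Adj i a → a = j) {p : g.Walk y z} (hp : p.IsPath)
    (hy : y ≠ i) (hz : z ≠ i) : i ∉ p.support := by
  intro hi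
  obtain ⟨q, r, rfl⟩ := SimpleGraph.Walk.mem_support_iff_exists_append.mp hi
  obtain ⟨b, hb, r', hr⟩ := r.exists_eq_cons_of_ne (Ne.symm hz)
  obtain ⟨c, hc, q', hq⟩ := q.reverse.exists_eq_cons_of_ne (Ne.symm hy)
  have hbj : b = j := hdeg b hb
  have hcj : c = j := hdeg c hc
  have hjq : j ∈ q.support := by
    have : c ∈ q.reverse.support := by
      rw [hq, SimpleGraph.Walk.support_cons]
      exact List.mem_cons_of_mem _ (SimpleGraph.Walk.start_mem_support q')
    rw [SimpleGraph.Walk.support_reverse, List.mem_reverse] at this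
    exact hcj ▸ this
  have hjr : j ∈ r.support.tail := by
    rw [hr, SimpleGraph.Walk.support_cons]
    simpa using hbj ▸ SimpleGraph.Walk.start_mem_support r'
  have hnodup := hp.support_nodup
  rw [SimpleGraph.Walk.support_append, List.nodup_append] at hnodup
  exact hnodup.2.2 j hjq j hjr rfl

private lemma btw_eq_zero (g : SimpleGraph V) {i j : V} (hdeg : ∀ a, g.Adj i a → a = j) :
    btw g i = 0 := by
  classical
  simp only [_root_.btw]
  rw [mul_eq_zero]
  right
  apply Finset.sum_eq_zero
  intro y _
  apply Finset.sum_eq_zero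
  intro z _
  split_ifs with h
  · have : sigmaThr g y z i = 0 := by
      rw [sigmaThr, Nat.card_eq_zero]
      left
      constructor
      rintro ⟨p, hlen, hsup⟩
      exact not_mem_support g hdeg p.2 h.2.1 h.2.2 hsup
    rw [this]
    simp
  · rfl

private lemma addE_delE (g : SimpleGraph V) {i j : V} (h : g.Adj i j) :
    addE (delE g i j) i j = g := by
  ext a b
  simp only [addE, delE, SimpleGraph.sup_adj, SimpleGraph.deleteEdges_adj,
    SimpleGraph.fromEdgeSet_adj, Set.mem_singleton_iff]
  constructor
  · rintro (⟨ha, _⟩ | ⟨he, hab⟩)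
    · exact ha
    · rcases Sym2.eq_iff.mp he with ⟨rfl, rfl⟩ | ⟨rfl, rfl⟩
      · exact h
      · exact h.symm
  · intro hab
    by_cases he : s(a, b) = s(i, j)
    · exact Or.inr ⟨he, hab.ne⟩
    · exact Or.inl ⟨hab, he⟩

private lemma delE_not_adj (g : SimpleGraph V) (i j : V) : ¬ (delE g i j).Adj i j := by
  simp [delE, SimpleGraph.deleteEdges_adj]

private lemma delE_neighborSet (g : SimpleGraph V) {i j : V} (h : g.Adj i j) :
    (delE g i j).neighborSet i = g.neighborSet i \ {j} := by
  ext a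
  simp only [SimpleGraph.mem_neighborSet, delE, SimpleGraph.deleteEdges_adj,
    Set.mem_singleton_iff, Set.mem_diff]
  constructor
  · rintro ⟨ha, hne⟩
    refine ⟨ha, fun hj => hne ?_⟩
    rw [hj]
  · rintro ⟨ha, hne⟩
    refine ⟨ha, fun he => ?_⟩
    rcases Sym2.eq_iff.mp he with ⟨-, rfl⟩ | ⟨rfl, rfl⟩
    · exact hne rfl
    · exact h.ne rfl

private lemma deg_delE (g : SimpleGraph V) {i j : V} (h : g.Adj i j) :
    deg (delE g i j) i = deg g i - 1 := by
  have hmem : j ∈ g.neighborSet i := h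
  rw [deg, deg, delE_neighborSet g h, Nat.card_coe_set_eq, Nat.card_coe_set_eq,
    Set.ncard_diff_singleton_of_mem hmem]

private lemma one_le_deg (g : SimpleGraph V) {i j : V} (h : g.Adj i j) :
    1 ≤ deg g i := by
  have : Nonempty (g.neighborSet i) := ⟨⟨j, h⟩⟩
  exact Nat.card_pos

end Helpers

theorem statement_8 {V : Type*} [Fintype V] (g : SimpleGraph V) :
    -- (i)
    (∀ i j : V, i ≠ j → ¬ g.Adj i j → ¬ g.Reachable i j →
      btw (addE g i j) i ≥ btw g i ∧
      ((∃ k, g.Adj i k) → btw (addE g i j) i > btw g i)) ∧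
    -- (ii)
    (∀ i j : V, g.Adj i j → ¬ (delE g i j).Reachable i j →
      ((∃ c₀ : ℝ, 0 < c₀ ∧ ∀ c : ℝ, 0 < c → c < c₀ →
          util (fun v h => btw h v) c i (delE g i j) > util (fun v h => btw h v) c i g) ↔
        deg g i = 1)) ∧
    -- (iii)
    (∀ i j : V, i ≠ j → ¬ g.Adj i j → g.Reachable i j →
      btw (addE g i j) i ≥ btw g i) := by
  classical
  refine ⟨?_, ?_, ?_⟩
  · intro i j hne hadj hreach
    refine ⟨btw_le_addE g hne hadj, ?_⟩
    rintro ⟨k, hk⟩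
    exact btw_lt_addE g hne hadj hreach hk
  · intro i j hadj hreach
    set g' := delE g i j with hg'
    have hne : i ≠ j := hadj.ne
    have hadj' : ¬ g'.Adj i j := delE_not_adj g i j
    have hback : addE g' i j = g := addE_delE g hadj
    have hdegd : deg g' i = deg g i - 1 := deg_delE g hadj
    have hdeg1 : 1 ≤ deg g i := one_le_deg g hadj
    have hdn : deg g i = (g.neighborSet i).ncard := Nat.card_coe_set_eq _
    constructor
    · rintro ⟨c₀, hc₀, hc⟩
      by_contra hd1
      have h2 : 1 < (g.neighborSet i).ncard := by omega
      obtain ⟨k, hkmem, hkj⟩ := Set.exists_ne_of_one_lt_ncard h2 j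
      have hk : g.Adj i k := hkmem
      have hk' : g'.Adj i k := by
        simp only [hg', delE, SimpleGraph.deleteEdges_adj, Set.mem_singleton_iff]
        refine ⟨hk, fun he => ?_⟩
        rcases Sym2.eq_iff.mp he with ⟨-, rfl⟩ | ⟨rfl, rfl⟩
        · exact hkj rfl
        · exact hne rfl
      have hlt : btw g' i < btw g i := by
        have := btw_lt_addE g' hne hadj' hreach hk'
        rwa [hback] at this
      set D := btw g i - btw g' i with hD
      have hDpos : 0 < D := by linarith
      set c := min c₀ D / 2 with hcdef
      have hcc : 0 < c := by
        have h1 : 0 < min c₀ D := lt_min hc₀ hDpos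
        positivity
      have hclt : c < c₀ := by
        have h1 : 0 < min c₀ D := lt_min hc₀ hDpos
        have h2 : min c₀ D ≤ c₀ := min_le_left _ _
        rw [hcdef]; linarith
      have hthis := hc c hcc hclt
      simp only [util] at hthis
      rw [hdegd] at hthis
      have hcast : ((deg g i - 1 : ℕ) : ℝ) = (deg g i : ℝ) - 1 := by
        rw [Nat.cast_sub hdeg1]; norm_num
      rw [hcast] at hthis
      have hcD : c ≤ D / 2 := by
        have : min c₀ D ≤ D := min_le_right _ _
        rw [hcdef]; linarith
      linarith
    · intro hdeg1'
      have huniq : ∀ a, g.Adj i a → a = j := by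
        intro a ha
        have hsub := (Nat.card_eq_one_iff_unique.mp (hdeg1' ▸ rfl :
          Nat.card (g.neighborSet i) = 1)).1
        exact congrArg Subtype.val (hsub.elim (⟨a, ha⟩ : g.neighborSet i) ⟨j, hadj⟩)
      have huniq' : ∀ a, g'.Adj i a → a = j := by
        intro a ha
        simp only [hg', delE, SimpleGraph.deleteEdges_adj] at ha
        exact huniq a ha.1
      have h1 : btw g i = 0 := btw_eq_zero g huniq
      have h2 : btw g' i = 0 := btw_eq_zero g' huniq'
      refine ⟨1, one_pos, fun c hc hc1 => ?_⟩
      simp only [util, h1, h2, hdegd, hdeg1']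
      norm_num
      exact hc
  · intro i j hne hadj _
    exact btw_le_addE g hne hadj
end
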